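/- Let A ∈ ℝ^{n×d}, x* satisfy AᵀA x* = Aᵀ b, and let S be drawn from a distribution 𝒟 with M = 𝔼[SSᵀ/‖AS‖₂²] positive definite. Then for any x, the inequality 𝔼[‖Sᵀ Aᵀ A(x − x*)‖₂² / ‖AS‖₂²] = ‖M^{1/2} AᵀA(x − x*)‖₂² ≥ σ²_min(AM^{1/2}) · ‖x − x*‖²_{AᵀA} holds, where σ_min denotes the smallest nonzero singular value. -/

import Mathlib

open Matrix

/-- Squared spectral (ℓ2 operator) norm of a real matrix. -/
noncomputable def opNormSq {a b : ℕ} (B : Matrix (Fin a) (Fin b) ℝ) : ℝ :=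
  sSup {t : ℝ | ∃ v : Fin b → ℝ, v ⬝ᵥ v = 1 ∧ t = B.mulVec v ⬝ᵥ B.mulVec v}

/-- Squared smallest nonzero singular value of a real matrix, characterized as
the infimum of the Rayleigh quotient of `BᵀB` over unit vectors in the row
space of `B`. -/
noncomputable def sigmaMinSq {a b : ℕ} (B : Matrix (Fin a) (Fin b) ℝ) : ℝ :=
  sInf {t : ℝ | ∃ v : Fin b → ℝ, (∃ u : Fin a → ℝ, Bᵀ.mulVec u = v) ∧
    v ⬝ᵥ v = 1 ∧ t = B.mulVec v ⬝ᵥ B.mulVec v}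

noncomputable def Matrix.PosSemidef.sqrt {n : Type*} [Fintype n] [DecidableEq n] {𝕜 : Type*}
    [RCLike 𝕜] [PartialOrder 𝕜] {A : Matrix n n 𝕜} (hA : Matrix.PosSemidef A) : Matrix n n 𝕜 :=
  hA.1.eigenvectorUnitary.1 * diagonal ((↑) ∘ (√·) ∘ hA.1.eigenvalues) *
  (star hA.1.eigenvectorUnitary : Matrix n n 𝕜)

private lemma psd_sqrt_mul_self {d : ℕ} {M : Matrix (Fin d) (Fin d) ℝ} (hA : M.PosSemidef) :
    hA.sqrt * hA.sqrt = M := by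
  unfold Matrix.PosSemidef.sqrt
  have hU : (star hA.1.eigenvectorUnitary : Matrix (Fin d) (Fin d) ℝ) * hA.1.eigenvectorUnitary.1 = 1 :=
    Unitary.coe_star_mul_self _
  have hD : diagonal ((↑) ∘ (√·) ∘ hA.1.eigenvalues) * diagonal ((↑) ∘ (√·) ∘ hA.1.eigenvalues)
      = diagonal (RCLike.ofReal ∘ hA.1.eigenvalues : Fin d → ℝ) := by
    rw [diagonal_mul_diagonal]
    congr 1; funext i
    simp [Real.mul_self_sqrt (hA.eigenvalues_nonneg i)]
  conv_rhs => rw [hA.1.spectral_theorem, Unitary.conjStarAlgAut_apply]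
  calc _ = hA.1.eigenvectorUnitary.1 * diagonal ((↑) ∘ (√·) ∘ hA.1.eigenvalues) *
      ((star hA.1.eigenvectorUnitary : Matrix (Fin d) (Fin d) ℝ) * hA.1.eigenvectorUnitary.1) *
      diagonal ((↑) ∘ (√·) ∘ hA.1.eigenvalues) * (star hA.1.eigenvectorUnitary : Matrix (Fin d) (Fin d) ℝ) := by
        simp only [Matrix.mul_assoc]; rfl
    _ = _ := by rw [hU, Matrix.mul_one, Matrix.mul_assoc _ (diagonal _) (diagonal _), hD]

private lemma psd_sqrt_transpose {d : ℕ} {M : Matrix (Fin d) (Fin d) ℝ} (hA : M.PosSemidef) :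
    hA.sqrtᵀ = hA.sqrt := by
  unfold Matrix.PosSemidef.sqrt
  rw [Matrix.transpose_mul, Matrix.transpose_mul, diagonal_transpose, Matrix.mul_assoc]
  congr 1

private lemma dot_self_nonneg' {a : ℕ} (v : Fin a → ℝ) : 0 ≤ v ⬝ᵥ v :=
  Finset.sum_nonneg fun _ _ => mul_self_nonneg _

private lemma dot_aux {a b : ℕ} (C : Matrix (Fin a) (Fin b) ℝ) (v : Fin a → ℝ) :
    Cᵀ.mulVec v ⬝ᵥ Cᵀ.mulVec v = (C * Cᵀ).mulVec v ⬝ᵥ v := by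
  rw [Matrix.dotProduct_mulVec, Matrix.vecMul_transpose, Matrix.mulVec_mulVec]

/-- Key lemma: for `y` in the range of `B`,
`σ²_min(B) ‖y‖² ≤ ‖Bᵀ y‖²`. -/
private lemma sum_mulVec' {m k : ℕ} {ι : Type*} [Fintype ι]
    (C : ι → Matrix (Fin m) (Fin k) ℝ) (v : Fin k → ℝ) :
    (∑ i, C i).mulVec v = ∑ i, (C i).mulVec v :=
  map_sum (Matrix.mulVec.addMonoidHomLeft v) C Finset.univ

private lemma sum_dot' {m : ℕ} {ι : Type*} [Fintype ι] (f : ι → Fin m → ℝ) (g : Fin m → ℝ) :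
    (∑ i, f i) ⬝ᵥ g = ∑ i, f i ⬝ᵥ g := by
  simp only [dotProduct, Finset.sum_apply, Finset.sum_mul]
  rw [Finset.sum_comm]

private lemma key {n d : ℕ} (B : Matrix (Fin n) (Fin d) ℝ) (y : Fin n → ℝ)
    (hy : ∃ z : Fin d → ℝ, B.mulVec z = y) :
    sigmaMinSq B * (y ⬝ᵥ y) ≤ Bᵀ.mulVec y ⬝ᵥ Bᵀ.mulVec y := by
  by_cases h0 : y = 0
  · simp [h0, Matrix.mulVec_zero]
  -- find u in the row space of B with B u = y
  have hrange : LinearMap.range (B * Bᵀ).mulVecLin = LinearMap.range B.mulVecLin := by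
    apply Submodule.eq_of_le_of_finrank_eq
    · rw [Matrix.mulVecLin_mul]; exact LinearMap.range_comp_le_range _ _
    · exact Matrix.rank_self_mul_transpose B
  obtain ⟨z, hz⟩ := hy
  have hy' : y ∈ LinearMap.range (B * Bᵀ).mulVecLin := by
    rw [hrange]; exact ⟨z, hz⟩
  obtain ⟨w, hw⟩ := hy'
  set u : Fin d → ℝ := Bᵀ.mulVec w with hu
  have hBu : B.mulVec (Bᵀ.mulVec w) = y := by
    rw [Matrix.mulVec_mulVec]; exact hw
  have hune : u ⬝ᵥ u ≠ 0 := by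
    intro h
    rw [dotProduct_self_eq_zero] at h
    apply h0
    rw [← hBu, ← hu, h, Matrix.mulVec_zero]
  have hupos : 0 < u ⬝ᵥ u := lt_of_le_of_ne (dot_self_nonneg' u) (Ne.symm hune)
  set c : ℝ := Real.sqrt (u ⬝ᵥ u) with hc
  have hcpos : 0 < c := Real.sqrt_pos.mpr hupos
  have hcsq : c * c = u ⬝ᵥ u := Real.mul_self_sqrt hupos.le
  set v : Fin d → ℝ := c⁻¹ • u with hv
  have hv1 : v ⬝ᵥ v = 1 := by
    rw [hv, smul_dotProduct, dotProduct_smul, smul_eq_mul, smul_eq_mul,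
      ← mul_assoc, ← mul_inv, hcsq]
    exact inv_mul_cancel₀ hune
  have hvrange : ∃ u' : Fin n → ℝ, Bᵀ.mulVec u' = v := by
    refine ⟨c⁻¹ • w, ?_⟩
    rw [Matrix.mulVec_smul, hv, hu]
  have hBv : B.mulVec v = c⁻¹ • y := by
    rw [hv, Matrix.mulVec_smul, hu, hBu]
  set t : ℝ := B.mulVec v ⬝ᵥ B.mulVec v with ht
  have htval : t = c⁻¹ * c⁻¹ * (y ⬝ᵥ y) := by
    rw [ht, hBv, smul_dotProduct, dotProduct_smul, smul_eq_mul, smul_eq_mul,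
      mul_assoc]
  have hmem : t ∈ {t : ℝ | ∃ v : Fin d → ℝ, (∃ u : Fin n → ℝ, Bᵀ.mulVec u = v) ∧
      v ⬝ᵥ v = 1 ∧ t = B.mulVec v ⬝ᵥ B.mulVec v} := ⟨v, hvrange, hv1, rfl⟩
  have hbdd : BddBelow {t : ℝ | ∃ v : Fin d → ℝ, (∃ u : Fin n → ℝ, Bᵀ.mulVec u = v) ∧
      v ⬝ᵥ v = 1 ∧ t = B.mulVec v ⬝ᵥ B.mulVec v} := by
    refine ⟨0, fun s hs => ?_⟩
    obtain ⟨v', _, _, hs⟩ := hs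
    rw [hs]; exact dot_self_nonneg' _
  have h1 : sigmaMinSq B ≤ t := csInf_le hbdd hmem
  have h2 : sigmaMinSq B * (y ⬝ᵥ y) ≤ t * (y ⬝ᵥ y) :=
    mul_le_mul_of_nonneg_right h1 (dot_self_nonneg' y)
  refine h2.trans ?_
  -- Cauchy–Schwarz: (y⬝y)^2 = (u ⬝ Bᵀy)^2 ≤ (u⬝u)(Bᵀy⬝Bᵀy)
  have hdot : u ⬝ᵥ Bᵀ.mulVec y = y ⬝ᵥ y := by
    rw [Matrix.dotProduct_mulVec, Matrix.vecMul_transpose, hu, hBu]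
  have hcs : (y ⬝ᵥ y) ^ 2 ≤ (u ⬝ᵥ u) * (Bᵀ.mulVec y ⬝ᵥ Bᵀ.mulVec y) := by
    have := Finset.sum_mul_sq_le_sq_mul_sq Finset.univ u (Bᵀ.mulVec y)
    have e1 : ∑ i, u i * Bᵀ.mulVec y i = y ⬝ᵥ y := hdot
    have e2 : ∑ i, u i ^ 2 = u ⬝ᵥ u := by
      simp [dotProduct, sq]
    have e3 : ∑ i, (Bᵀ.mulVec y) i ^ 2 = Bᵀ.mulVec y ⬝ᵥ Bᵀ.mulVec y := by
      simp [dotProduct, sq]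
    rwa [e1, e2, e3] at this
  rw [htval]
  have : c⁻¹ * c⁻¹ * (y ⬝ᵥ y) * (y ⬝ᵥ y) = (y ⬝ᵥ y) ^ 2 / (u ⬝ᵥ u) := by
    rw [← hcsq]; field_simp
  rw [this, div_le_iff₀ hupos]
  calc (y ⬝ᵥ y) ^ 2 ≤ (u ⬝ᵥ u) * (Bᵀ.mulVec y ⬝ᵥ Bᵀ.mulVec y) := hcs
    _ = (Bᵀ.mulVec y ⬝ᵥ Bᵀ.mulVec y) * (u ⬝ᵥ u) := mul_comm _ _

/-- `𝔼[‖Sᵀ AᵀA(x − x*)‖²/‖AS‖₂²] = ‖M^{1/2} AᵀA(x − x*)‖²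
    ≥ σ²_min(A M^{1/2}) ‖x − x*‖²_{AᵀA}` for `M = 𝔼[SSᵀ/‖AS‖₂²]` positive definite. -/
theorem stmt11 {n d q : ℕ} {ι : Type*} [Fintype ι]
    (A : Matrix (Fin n) (Fin d) ℝ) (b : Fin n → ℝ)
    (xstar : Fin d → ℝ) (hstar : Aᵀ.mulVec (A.mulVec xstar) = Aᵀ.mulVec b)
    (p : ι → ℝ) (hp : ∀ i, 0 ≤ p i) (hsum : ∑ i, p i = 1)
    (S : ι → Matrix (Fin d) (Fin q) ℝ)
    (hM : (∑ i, (p i / opNormSq (A * S i)) • (S i * (S i)ᵀ)).PosDef) :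
    ∀ x : Fin d → ℝ,
      let g := Aᵀ.mulVec (A.mulVec (x - xstar))
      (∑ i, p i * (((S i)ᵀ.mulVec g ⬝ᵥ (S i)ᵀ.mulVec g) / opNormSq (A * S i)) =
          hM.posSemidef.sqrt.mulVec g ⬝ᵥ hM.posSemidef.sqrt.mulVec g) ∧
        sigmaMinSq (A * hM.posSemidef.sqrt) *
            (A.mulVec (x - xstar) ⬝ᵥ A.mulVec (x - xstar)) ≤
          hM.posSemidef.sqrt.mulVec g ⬝ᵥ hM.posSemidef.sqrt.mulVec g := by
  intro x g
  set Mmat : Matrix (Fin d) (Fin d) ℝ :=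
    ∑ i, (p i / opNormSq (A * S i)) • (S i * (S i)ᵀ) with hMmat
  set Q : Matrix (Fin d) (Fin d) ℝ := hM.posSemidef.sqrt with hQ
  have hQsym : Qᵀ = Q := by
    exact psd_sqrt_transpose hM.posSemidef
  have hQQ : Q * Q = Mmat := psd_sqrt_mul_self hM.posSemidef
  have hRHS : Q.mulVec g ⬝ᵥ Q.mulVec g = Mmat.mulVec g ⬝ᵥ g := by
    have := dot_aux Qᵀ g
    rw [Matrix.transpose_transpose, hQsym, hQQ] at this
    exact this
  constructor
  · -- the expectation identity
    rw [hRHS, hMmat, sum_mulVec', sum_dot']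
    refine Finset.sum_congr rfl fun i _ => ?_
    rw [dot_aux (S i) g, Matrix.smul_mulVec, smul_dotProduct, smul_eq_mul]
    rw [div_mul_eq_mul_div, mul_div_assoc]
  · -- the singular value bound
    have hy : ∃ z : Fin d → ℝ, (A * Q).mulVec z = A.mulVec (x - xstar) := by
      refine ⟨(Q * Mmat⁻¹).mulVec (x - xstar), ?_⟩
      rw [Matrix.mulVec_mulVec]
      have hdet : IsUnit Mmat.det := hM.det_pos.ne'.isUnit
      have hAQ : A * Q * (Q * Mmat⁻¹) = A := by
        calc A * Q * (Q * Mmat⁻¹) = A * (Q * Q) * Mmat⁻¹ := by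
              simp only [Matrix.mul_assoc]
          _ = A * (Mmat * Mmat⁻¹) := by rw [hQQ, Matrix.mul_assoc]
          _ = A := by rw [Matrix.mul_nonsing_inv _ hdet, Matrix.mul_one]
      rw [hAQ]
    have h := key (A * Q) (A.mulVec (x - xstar)) hy
    have htr : (A * Q)ᵀ.mulVec (A.mulVec (x - xstar)) = Q.mulVec g := by
      rw [Matrix.transpose_mul, hQsym, ← Matrix.mulVec_mulVec]
    rwa [htr] at h
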